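/- For the equilateral triangle E with vertices (0,0), (1,0), (1/2,√3/2), the functions u₁(x,y) = 2[cos(π(2x−1)/3) + cos(2πy/√3)]·sin(π(2x−1)/3) and u₂(x,y) = cos(2π(2x−1)/3) − 2cos(π(2x−1)/3)cos(2πy/√3) satisfy ∫_E (∂u₁/∂x)(∂u₂/∂y) dA = 81√3/32 + π and ∫_E (∂u₁/∂y)(∂u₂/∂x) dA = 81√3/32 − π. -/

import Mathlib

open MeasureTheory Real

section Aux

private lemma keyA (x : ℝ) :
    (1/4)*Real.cos (2*x) - (5/16)*Real.cos (2*(2*x)) - (1/8)*Real.cos (3*(2*x))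
      + (1/16)*Real.cos (2*(2*(2*x)))
      + 1/12 + (1/24)*Real.cos (3*(2*x)) - (x/4)*Real.sin (3*(2*x))
    = Real.sin (3*x) * (Real.sin x - (2/3)*Real.sin x^3
        - Real.cos (3*x)*(x/2 + Real.sin x * Real.cos x/2)) := by
  simp only [Real.sin_two_mul, Real.cos_two_mul, Real.sin_three_mul, Real.cos_three_mul]
  linear_combination ((1/3) + (5/6) * Real.cos x ^ 2 + (-32/3) * Real.cos x ^ 4
    + (8) * Real.cos x ^ 6 + (6) * Real.sin x * Real.cos x * x + (10/3) * Real.sin x ^ 2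
    + (26/3) * Real.sin x ^ 2 * Real.cos x ^ 2 + (-8) * Real.sin x ^ 2 * Real.cos x ^ 4
    + (-8/3) * Real.sin x ^ 4) * Real.sin_sq_add_cos_sq x

private lemma keyB (x : ℝ) :
    (1/4)*Real.cos (2*x) - (5/16)*Real.cos (2*(2*x)) + (1/8)*Real.cos (3*(2*x))
      + (1/16)*Real.cos (2*(2*(2*x)))
      - 1/12 - (1/24)*Real.cos (3*(2*x)) + (x/4)*Real.sin (3*(2*x))
    = Real.sin (3*x) * (Real.cos (3*x)*(x/2 - Real.sin x * Real.cos x/2)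
        + (2/3)*Real.sin x^3) := by
  simp only [Real.sin_two_mul, Real.cos_two_mul, Real.sin_three_mul, Real.cos_three_mul]
  linear_combination ((2/3) + (-11/6) * Real.cos x ^ 2 + (-16/3) * Real.cos x ^ 4
    + (8) * Real.cos x ^ 6 + (-6) * Real.sin x * Real.cos x * x + (2/3) * Real.sin x ^ 2
    + (10/3) * Real.sin x ^ 2 * Real.cos x ^ 2 + (-8) * Real.sin x ^ 2 * Real.cos x ^ 4
    + (8/3) * Real.sin x ^ 4) * Real.sin_sq_add_cos_sq x

private lemma hull_eq' : convexHull ℝ {((0:ℝ),(0:ℝ)), (1,0), (1/2, Real.sqrt 3/2)} =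
    {p : ℝ × ℝ | p.2 ∈ Set.Icc 0 (Real.sqrt 3 / 2) ∧
      p.1 ∈ Set.Icc (p.2 / Real.sqrt 3) (1 - p.2 / Real.sqrt 3)} := by
  have h3 : (0:ℝ) < Real.sqrt 3 := Real.sqrt_pos.mpr (by norm_num)
  have h3' : Real.sqrt 3 ≠ 0 := ne_of_gt h3
  apply le_antisymm
  · apply convexHull_min
    · rintro p (rfl | rfl | rfl)
      · constructor
        · exact ⟨le_rfl, by positivity⟩
        · simp
      · refine ⟨⟨le_rfl, by positivity⟩, ?_⟩
        simp
      · refine ⟨⟨by positivity, le_rfl⟩, ?_⟩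
        have : Real.sqrt 3 / 2 / Real.sqrt 3 = 1/2 := by field_simp
        rw [this]
        constructor <;> norm_num
    · rintro p ⟨⟨hp0, hp1⟩, hp2, hp3⟩ q ⟨⟨hq0, hq1⟩, hq2, hq3⟩ a b ha hb hab
      have e1 : (a • p + b • q).1 = a * p.1 + b * q.1 := rfl
      have e2 : (a • p + b • q).2 = a * p.2 + b * q.2 := rfl
      refine ⟨⟨?_, ?_⟩, ?_, ?_⟩ <;> simp only [e1, e2]
      · positivity
      · nlinarith
      · have : (a * p.2 + b * q.2) / Real.sqrt 3
            = a * (p.2 / Real.sqrt 3) + b * (q.2 / Real.sqrt 3) := by ring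
        rw [this]
        have := mul_le_mul_of_nonneg_left hp2 ha
        have := mul_le_mul_of_nonneg_left hq2 hb
        linarith
      · have : (a * p.2 + b * q.2) / Real.sqrt 3
            = a * (p.2 / Real.sqrt 3) + b * (q.2 / Real.sqrt 3) := by ring
        have := mul_le_mul_of_nonneg_left hp3 ha
        have := mul_le_mul_of_nonneg_left hq3 hb
        nlinarith
  · rintro p ⟨⟨hy0, hy⟩, hx1, hx2⟩
    set x := p.1 with hx
    set y := p.2 with hyy
    have hA : ((0:ℝ),(0:ℝ)) ∈ convexHull ℝ {((0:ℝ),(0:ℝ)), (1,0), (1/2, Real.sqrt 3/2)} :=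
      subset_convexHull _ _ (by simp)
    have hB : ((1:ℝ),(0:ℝ)) ∈ convexHull ℝ {((0:ℝ),(0:ℝ)), (1,0), (1/2, Real.sqrt 3/2)} :=
      subset_convexHull _ _ (by simp)
    have hC : ((1/2:ℝ), Real.sqrt 3/2) ∈
        convexHull ℝ {((0:ℝ),(0:ℝ)), (1,0), (1/2, Real.sqrt 3/2)} :=
      subset_convexHull _ _ (by simp)
    set β := x - y / Real.sqrt 3 with hβ
    set γ := 2 * y / Real.sqrt 3 with hγ
    set α := 1 - x - y / Real.sqrt 3 with hα
    have hβ0 : 0 ≤ β := by simp [hβ]; linarith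
    have hγ0 : 0 ≤ γ := by positivity
    have hα0 : 0 ≤ α := by simp [hα]; linarith
    by_cases hw : β + γ = 0
    · have hβz : β = 0 := by linarith
      have hγz : γ = 0 := by linarith
      have hyz : y = 0 := by
        have h2 : 2 * y = 0 := by
          have := hγz; rw [hγ, div_eq_zero_iff] at this; exact this.resolve_right h3'
        linarith
      have hxz : x = 0 := by
        have := hβz; rw [hβ, hyz] at this; simpa using this
      have : p = ((0:ℝ),(0:ℝ)) := Prod.ext (by rw [← hx, hxz]) (by rw [← hyy, hyz])
      rw [this]; exact hA
    · have hw0 : 0 < β + γ := lt_of_le_of_ne (by linarith) (Ne.symm hw)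
      set w := β + γ with hwd
      have hq : (β/w) • ((1:ℝ),(0:ℝ)) + (γ/w) • ((1/2:ℝ), Real.sqrt 3/2) ∈
          convexHull ℝ {((0:ℝ),(0:ℝ)), (1,0), (1/2, Real.sqrt 3/2)} := by
        refine (convex_convexHull ℝ _) hB hC (by positivity) (by positivity) ?_
        field_simp
        exact hwd.symm
      have hp : p = α • ((0:ℝ),(0:ℝ)) +
          w • ((β/w) • ((1:ℝ),(0:ℝ)) + (γ/w) • ((1/2:ℝ), Real.sqrt 3/2)) := by
        have hwne : w ≠ 0 := ne_of_gt hw0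
        apply Prod.ext
        · show x = α * 0 + w * (β/w * 1 + γ/w * (1/2))
          field_simp
          rw [hβ, hγ]; field_simp; ring
        · show y = α * 0 + w * (β/w * 0 + γ/w * (Real.sqrt 3/2))
          field_simp
          rw [hγ, div_mul_cancel₀ _ h3']
          ring
      rw [hp]
      exact (convex_convexHull ℝ _) hA hq hα0 (le_of_lt hw0)
        (by rw [hwd, hα, hβ, hγ]; ring)

private lemma tri_fubini' (F : ℝ × ℝ → ℝ) (hF : Continuous F)
    (T : Set (ℝ × ℝ))
    (hT : T = {p : ℝ × ℝ | p.2 ∈ Set.Icc 0 (Real.sqrt 3 / 2) ∧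
      p.1 ∈ Set.Icc (p.2 / Real.sqrt 3) (1 - p.2 / Real.sqrt 3)})
    (hTc : IsCompact T) :
    ∫ p in T, F p
    = ∫ y in Set.Icc 0 (Real.sqrt 3/2),
        ∫ x in Set.Icc (y / Real.sqrt 3) (1 - y / Real.sqrt 3), F (x, y) := by
  have hTm : MeasurableSet T := hTc.isClosed.measurableSet
  have hInt : IntegrableOn F T := hF.continuousOn.integrableOn_compact hTc
  have hInd : Integrable (T.indicator F) := (integrable_indicator_iff hTm).2 hInt
  rw [← integral_indicator hTm]
  rw [MeasureTheory.Measure.volume_eq_prod] at hInd ⊢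
  rw [MeasureTheory.integral_prod_symm _ hInd]
  rw [← integral_indicator (measurableSet_Icc :
    MeasurableSet (Set.Icc (0:ℝ) (Real.sqrt 3/2)))]
  congr 1
  funext y
  by_cases hy : y ∈ Set.Icc (0:ℝ) (Real.sqrt 3/2)
  · rw [Set.indicator_of_mem hy]
    rw [← integral_indicator (measurableSet_Icc :
      MeasurableSet (Set.Icc (y/Real.sqrt 3) (1 - y/Real.sqrt 3)))]
    congr 1
    funext x
    by_cases hx : x ∈ Set.Icc (y/Real.sqrt 3) (1 - y/Real.sqrt 3)
    · rw [Set.indicator_of_mem hx, Set.indicator_of_mem (by rw [hT]; exact ⟨hy, hx⟩)]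
    · rw [Set.indicator_of_notMem hx, Set.indicator_of_notMem (by
        rw [hT]; intro h; exact hx h.2)]
  · rw [Set.indicator_of_notMem hy]
    have : ∀ x, T.indicator F (x, y) = 0 := by
      intro x
      apply Set.indicator_of_notMem
      rw [hT]; intro h; exact hy h.1
    simp [this]

private lemma dtheta' (x : ℝ) : HasDerivAt (fun t : ℝ => π*(2*t-1)/3) (2*π/3) x := by
  have h1 : HasDerivAt (fun t : ℝ => 2*t-1) 2 x := by
    simpa using ((hasDerivAt_id x).const_mul (2:ℝ)).sub_const 1
  have h2 := (h1.const_mul π).div_const 3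
  refine h2.congr_deriv ?_
  ring

private lemma d1x' (y x : ℝ) : HasDerivAt
    (fun t => 2*(Real.cos (π*(2*t-1)/3) + Real.cos (2*π*y/Real.sqrt 3)) * Real.sin (π*(2*t-1)/3))
    ((4*π/3) * ((Real.cos (π*(2*x-1)/3) + Real.cos (2*π*y/Real.sqrt 3)) * Real.cos (π*(2*x-1)/3)
        - Real.sin (π*(2*x-1)/3)^2)) x := by
  have ha := dtheta' x
  have h := ((ha.cos.add_const (Real.cos (2*π*y/Real.sqrt 3))).const_mul 2).mul ha.sin
  refine h.congr_deriv ?_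
  ring

private lemma d2y' (x y : ℝ) : HasDerivAt
    (fun s => Real.cos (2*π*(2*x-1)/3)
      - 2*Real.cos (π*(2*x-1)/3) * Real.cos (2*π*s/Real.sqrt 3))
    ((4*π/Real.sqrt 3) * Real.cos (π*(2*x-1)/3) * Real.sin (2*π*y/Real.sqrt 3)) y := by
  have hb : HasDerivAt (fun s : ℝ => 2*π*s/Real.sqrt 3) (2*π/Real.sqrt 3) y := by
    simpa using ((hasDerivAt_id y).const_mul (2*π)).div_const (Real.sqrt 3)
  have h := ((hb.cos.const_mul (2*Real.cos (π*(2*x-1)/3))).const_sub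
    (Real.cos (2*π*(2*x-1)/3)))
  refine h.congr_deriv ?_
  ring

private lemma d1y' (x y : ℝ) : HasDerivAt
    (fun s => 2*(Real.cos (π*(2*x-1)/3) + Real.cos (2*π*s/Real.sqrt 3)) * Real.sin (π*(2*x-1)/3))
    (-(4*π/Real.sqrt 3) * Real.sin (π*(2*x-1)/3) * Real.sin (2*π*y/Real.sqrt 3)) y := by
  have hb : HasDerivAt (fun s : ℝ => 2*π*s/Real.sqrt 3) (2*π/Real.sqrt 3) y := by
    simpa using ((hasDerivAt_id y).const_mul (2*π)).div_const (Real.sqrt 3)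
  have h := ((hb.cos.const_add (Real.cos (π*(2*x-1)/3))).const_mul 2).mul_const
    (Real.sin (π*(2*x-1)/3))
  refine h.congr_deriv ?_
  ring

private lemma d2x' (y x : ℝ) : HasDerivAt
    (fun t => Real.cos (2*π*(2*t-1)/3)
      - 2*Real.cos (π*(2*t-1)/3) * Real.cos (2*π*y/Real.sqrt 3))
    ((4*π/3) * (Real.sin (π*(2*x-1)/3) * Real.cos (2*π*y/Real.sqrt 3)
      - Real.sin (2*π*(2*x-1)/3))) x := by
  have ha := dtheta' x
  have ha2 : HasDerivAt (fun t : ℝ => 2*π*(2*t-1)/3) (4*π/3) x := by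
    have h1 : HasDerivAt (fun t : ℝ => 2*t-1) 2 x := by
      simpa using ((hasDerivAt_id x).const_mul (2:ℝ)).sub_const 1
    have h2 := (h1.const_mul (2*π)).div_const 3
    refine h2.congr_deriv ?_
    ring
  have h := ha2.cos.sub ((ha.cos.const_mul 2).mul_const (Real.cos (2*π*y/Real.sqrt 3)))
  refine h.congr_deriv ?_
  ring

private lemma innerA (y : ℝ) (hy : y ∈ Set.Icc 0 (Real.sqrt 3/2)) :
    (∫ x in Set.Icc (y/Real.sqrt 3) (1 - y/Real.sqrt 3),
      ((4*π/3) * ((Real.cos (π*(2*x-1)/3) + Real.cos (2*π*y/Real.sqrt 3))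
            * Real.cos (π*(2*x-1)/3)
          - Real.sin (π*(2*x-1)/3)^2)) *
      ((4*π/Real.sqrt 3) * Real.cos (π*(2*x-1)/3) * Real.sin (2*π*y/Real.sqrt 3)))
    = (16*π/Real.sqrt 3) * (Real.sin (3*(π/3 - 2*π*y/(3*Real.sqrt 3))) *
        (Real.sin (π/3 - 2*π*y/(3*Real.sqrt 3))
          - (2/3)*Real.sin (π/3 - 2*π*y/(3*Real.sqrt 3))^3
          - Real.cos (3*(π/3 - 2*π*y/(3*Real.sqrt 3))) * ((π/3 - 2*π*y/(3*Real.sqrt 3))/2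
            + Real.sin (π/3 - 2*π*y/(3*Real.sqrt 3))
              * Real.cos (π/3 - 2*π*y/(3*Real.sqrt 3))/2))) := by
  have h3 : (0:ℝ) < Real.sqrt 3 := Real.sqrt_pos.mpr (by norm_num)
  have h3' : Real.sqrt 3 ≠ 0 := ne_of_gt h3
  have hle : y/Real.sqrt 3 ≤ 1 - y/Real.sqrt 3 := by
    have : y/Real.sqrt 3 ≤ 1/2 := by
      rw [div_le_iff₀ h3]
      nlinarith [hy.2]
    linarith
  rw [MeasureTheory.integral_Icc_eq_integral_Ioc, ← intervalIntegral.integral_of_le hle]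
  rw [intervalIntegral.integral_eq_sub_of_hasDerivAt
    (f := fun x => (8*π/Real.sqrt 3) * Real.sin (2*π*y/Real.sqrt 3) *
      (Real.sin (π*(2*x-1)/3) - (2/3)*Real.sin (π*(2*x-1)/3)^3
        + Real.cos (2*π*y/Real.sqrt 3) * ((π*(2*x-1)/3)/2
          + Real.sin (π*(2*x-1)/3) * Real.cos (π*(2*x-1)/3)/2)))
    (fun t _ => by
      have ha := dtheta' t
      have h := ((((ha.sin.sub ((ha.sin.pow 3).const_mul (2/3))).add
        (((ha.div_const 2).add ((ha.sin.mul ha.cos).div_const 2)).const_mul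
          (Real.cos (2*π*y/Real.sqrt 3))))).const_mul
            ((8*π/Real.sqrt 3) * Real.sin (2*π*y/Real.sqrt 3)))
      refine h.congr_deriv ?_
      symm
      push_cast
      linear_combination ((16*π^2/(3*Real.sqrt 3)) * Real.sin (2*π*y/Real.sqrt 3) *
          (Real.cos (π*(2*t-1)/3) + Real.cos (2*π*y/Real.sqrt 3)/2)) *
            Real.sin_sq_add_cos_sq (π*(2*t-1)/3))
    (by apply Continuous.intervalIntegrable; fun_prop)]
  rw [show π*(2*(1 - y/Real.sqrt 3)-1)/3 = π/3 - 2*π*y/(3*Real.sqrt 3) by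
        field_simp; ring,
      show π*(2*(y/Real.sqrt 3)-1)/3 = -(π/3 - 2*π*y/(3*Real.sqrt 3)) by
        field_simp; ring,
      show 2*π*y/Real.sqrt 3 = π - 3*(π/3 - 2*π*y/(3*Real.sqrt 3)) by
        field_simp; ring]
  simp only [Real.sin_neg, Real.cos_neg, Real.sin_pi_sub, Real.cos_pi_sub]
  ring

private lemma innerB (y : ℝ) (hy : y ∈ Set.Icc 0 (Real.sqrt 3/2)) :
    (∫ x in Set.Icc (y/Real.sqrt 3) (1 - y/Real.sqrt 3),
      (-(4*π/Real.sqrt 3) * Real.sin (π*(2*x-1)/3) * Real.sin (2*π*y/Real.sqrt 3)) *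
      ((4*π/3) * (Real.sin (π*(2*x-1)/3) * Real.cos (2*π*y/Real.sqrt 3)
        - Real.sin (2*π*(2*x-1)/3))))
    = (16*π/Real.sqrt 3) * (Real.sin (3*(π/3 - 2*π*y/(3*Real.sqrt 3))) *
        (Real.cos (3*(π/3 - 2*π*y/(3*Real.sqrt 3))) * ((π/3 - 2*π*y/(3*Real.sqrt 3))/2
            - Real.sin (π/3 - 2*π*y/(3*Real.sqrt 3))
              * Real.cos (π/3 - 2*π*y/(3*Real.sqrt 3))/2)
          + (2/3)*Real.sin (π/3 - 2*π*y/(3*Real.sqrt 3))^3)) := by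
  have h3 : (0:ℝ) < Real.sqrt 3 := Real.sqrt_pos.mpr (by norm_num)
  have h3' : Real.sqrt 3 ≠ 0 := ne_of_gt h3
  have hle : y/Real.sqrt 3 ≤ 1 - y/Real.sqrt 3 := by
    have : y/Real.sqrt 3 ≤ 1/2 := by
      rw [div_le_iff₀ h3]
      nlinarith [hy.2]
    linarith
  rw [MeasureTheory.integral_Icc_eq_integral_Ioc, ← intervalIntegral.integral_of_le hle]
  rw [intervalIntegral.integral_eq_sub_of_hasDerivAt
    (f := fun x => -(8*π/Real.sqrt 3) * Real.sin (2*π*y/Real.sqrt 3) *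
      (Real.cos (2*π*y/Real.sqrt 3) * ((π*(2*x-1)/3)/2
          - Real.sin (π*(2*x-1)/3) * Real.cos (π*(2*x-1)/3)/2)
        - (2/3)*Real.sin (π*(2*x-1)/3)^3))
    (fun t _ => by
      have ha := dtheta' t
      have h := ((((((ha.div_const 2).sub ((ha.sin.mul ha.cos).div_const 2)).const_mul
        (Real.cos (2*π*y/Real.sqrt 3))).sub ((ha.sin.pow 3).const_mul (2/3)))).const_mul
          (-(8*π/Real.sqrt 3) * Real.sin (2*π*y/Real.sqrt 3)))
      refine h.congr_deriv ?_
      symm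
      push_cast
      rw [show 2*π*(2*t-1)/3 = 2*(π*(2*t-1)/3) by ring, Real.sin_two_mul]
      linear_combination (-(16*π^2/(3*Real.sqrt 3)) * Real.sin (2*π*y/Real.sqrt 3) *
        Real.cos (2*π*y/Real.sqrt 3) / 2) * Real.sin_sq_add_cos_sq (π*(2*t-1)/3))
    (by apply Continuous.intervalIntegrable; fun_prop)]
  rw [show π*(2*(1 - y/Real.sqrt 3)-1)/3 = π/3 - 2*π*y/(3*Real.sqrt 3) by
        field_simp; ring,
      show π*(2*(y/Real.sqrt 3)-1)/3 = -(π/3 - 2*π*y/(3*Real.sqrt 3)) by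
        field_simp; ring,
      show 2*π*y/Real.sqrt 3 = π - 3*(π/3 - 2*π*y/(3*Real.sqrt 3)) by
        field_simp; ring]
  simp only [Real.sin_neg, Real.cos_neg, Real.sin_pi_sub, Real.cos_pi_sub]
  ring

private lemma outerA :
    (∫ y in Set.Icc (0:ℝ) (Real.sqrt 3/2),
      (16*π/Real.sqrt 3) * (Real.sin (3*(π/3 - 2*π*y/(3*Real.sqrt 3))) *
        (Real.sin (π/3 - 2*π*y/(3*Real.sqrt 3))
          - (2/3)*Real.sin (π/3 - 2*π*y/(3*Real.sqrt 3))^3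
          - Real.cos (3*(π/3 - 2*π*y/(3*Real.sqrt 3))) * ((π/3 - 2*π*y/(3*Real.sqrt 3))/2
            + Real.sin (π/3 - 2*π*y/(3*Real.sqrt 3))
              * Real.cos (π/3 - 2*π*y/(3*Real.sqrt 3))/2))))
    = 81*Real.sqrt 3/32 + π := by
  have h3 : (0:ℝ) < Real.sqrt 3 := Real.sqrt_pos.mpr (by norm_num)
  have h3' : Real.sqrt 3 ≠ 0 := ne_of_gt h3
  have h0 : (0:ℝ) ≤ Real.sqrt 3/2 := by positivity
  rw [MeasureTheory.integral_Icc_eq_integral_Ioc, ← intervalIntegral.integral_of_le h0]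
  rw [intervalIntegral.integral_eq_sub_of_hasDerivAt
    (f := fun y => -24 * ((1/8)*Real.sin (2*(π/3 - 2*π*y/(3*Real.sqrt 3)))
      - (5/64)*Real.sin (2*(2*(π/3 - 2*π*y/(3*Real.sqrt 3))))
      - (1/48)*Real.sin (3*(2*(π/3 - 2*π*y/(3*Real.sqrt 3))))
      + (1/128)*Real.sin (2*(2*(2*(π/3 - 2*π*y/(3*Real.sqrt 3)))))
      + (π/3 - 2*π*y/(3*Real.sqrt 3))/12
      + ((π/3 - 2*π*y/(3*Real.sqrt 3))/24)*Real.cos (3*(2*(π/3 - 2*π*y/(3*Real.sqrt 3))))))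
    (fun t _ => by
      have hφ : HasDerivAt (fun y : ℝ => π/3 - 2*π*y/(3*Real.sqrt 3))
          (-(2*π/(3*Real.sqrt 3))) t := by
        simpa using (((hasDerivAt_id t).const_mul (2*π)).div_const
          (3*Real.sqrt 3)).const_sub (π/3)
      have h2 := hφ.const_mul (2:ℝ)
      have h4 := h2.const_mul (2:ℝ)
      have h8 := h4.const_mul (2:ℝ)
      have h6 := h2.const_mul (3:ℝ)
      have h := (((((((h2.sin.const_mul (1/8)).sub (h4.sin.const_mul (5/64))).sub
        (h6.sin.const_mul (1/48))).add (h8.sin.const_mul (1/128))).add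
          (hφ.div_const 12)).add ((hφ.div_const 24).mul h6.cos))).const_mul (-24 : ℝ)
      refine h.congr_deriv ?_
      rw [← keyA (π/3 - 2*π*t/(3*Real.sqrt 3))]
      field_simp
      ring)
    (by apply Continuous.intervalIntegrable; fun_prop)]
  rw [show π/3 - 2*π*(Real.sqrt 3/2)/(3*Real.sqrt 3) = 0 by field_simp; ring,
      show π/3 - 2*π*0/(3*Real.sqrt 3) = π/3 by norm_num]
  have v1 : Real.sin (2*(π/3)) = Real.sqrt 3/2 := by
    rw [show (2:ℝ)*(π/3) = π - π/3 by ring, Real.sin_pi_sub, Real.sin_pi_div_three]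
  have v2 : Real.sin (2*(2*(π/3))) = -(Real.sqrt 3/2) := by
    rw [show (2:ℝ)*(2*(π/3)) = π + π/3 by ring, Real.sin_add, Real.sin_pi, Real.cos_pi,
      Real.sin_pi_div_three]; ring
  have v3 : Real.sin (3*(2*(π/3))) = 0 := by
    rw [show (3:ℝ)*(2*(π/3)) = 2*π by ring, Real.sin_two_pi]
  have v4 : Real.sin (2*(2*(2*(π/3)))) = Real.sqrt 3/2 := by
    rw [show (2:ℝ)*(2*(2*(π/3))) = 2*π + (π - π/3) by ring, Real.sin_add, Real.sin_two_pi,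
      Real.cos_two_pi, Real.sin_pi_sub, Real.sin_pi_div_three]; ring
  have v5 : Real.cos (3*(2*(π/3))) = 1 := by
    rw [show (3:ℝ)*(2*(π/3)) = 2*π by ring, Real.cos_two_pi]
  rw [v1, v2, v3, v4, v5]
  norm_num
  ring

private lemma outerB :
    (∫ y in Set.Icc (0:ℝ) (Real.sqrt 3/2),
      (16*π/Real.sqrt 3) * (Real.sin (3*(π/3 - 2*π*y/(3*Real.sqrt 3))) *
        (Real.cos (3*(π/3 - 2*π*y/(3*Real.sqrt 3))) * ((π/3 - 2*π*y/(3*Real.sqrt 3))/2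
            - Real.sin (π/3 - 2*π*y/(3*Real.sqrt 3))
              * Real.cos (π/3 - 2*π*y/(3*Real.sqrt 3))/2)
          + (2/3)*Real.sin (π/3 - 2*π*y/(3*Real.sqrt 3))^3)))
    = 81*Real.sqrt 3/32 - π := by
  have h3 : (0:ℝ) < Real.sqrt 3 := Real.sqrt_pos.mpr (by norm_num)
  have h3' : Real.sqrt 3 ≠ 0 := ne_of_gt h3
  have h0 : (0:ℝ) ≤ Real.sqrt 3/2 := by positivity
  rw [MeasureTheory.integral_Icc_eq_integral_Ioc, ← intervalIntegral.integral_of_le h0]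
  rw [intervalIntegral.integral_eq_sub_of_hasDerivAt
    (f := fun y => -24 * ((1/8)*Real.sin (2*(π/3 - 2*π*y/(3*Real.sqrt 3)))
      - (5/64)*Real.sin (2*(2*(π/3 - 2*π*y/(3*Real.sqrt 3))))
      + (1/48)*Real.sin (3*(2*(π/3 - 2*π*y/(3*Real.sqrt 3))))
      + (1/128)*Real.sin (2*(2*(2*(π/3 - 2*π*y/(3*Real.sqrt 3)))))
      - (π/3 - 2*π*y/(3*Real.sqrt 3))/12
      - ((π/3 - 2*π*y/(3*Real.sqrt 3))/24)*Real.cos (3*(2*(π/3 - 2*π*y/(3*Real.sqrt 3))))))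
    (fun t _ => by
      have hφ : HasDerivAt (fun y : ℝ => π/3 - 2*π*y/(3*Real.sqrt 3))
          (-(2*π/(3*Real.sqrt 3))) t := by
        simpa using (((hasDerivAt_id t).const_mul (2*π)).div_const
          (3*Real.sqrt 3)).const_sub (π/3)
      have h2 := hφ.const_mul (2:ℝ)
      have h4 := h2.const_mul (2:ℝ)
      have h8 := h4.const_mul (2:ℝ)
      have h6 := h2.const_mul (3:ℝ)
      have h := (((((((h2.sin.const_mul (1/8)).sub (h4.sin.const_mul (5/64))).add
        (h6.sin.const_mul (1/48))).add (h8.sin.const_mul (1/128))).sub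
          (hφ.div_const 12)).sub ((hφ.div_const 24).mul h6.cos))).const_mul (-24 : ℝ)
      refine h.congr_deriv ?_
      rw [← keyB (π/3 - 2*π*t/(3*Real.sqrt 3))]
      field_simp
      ring)
    (by apply Continuous.intervalIntegrable; fun_prop)]
  rw [show π/3 - 2*π*(Real.sqrt 3/2)/(3*Real.sqrt 3) = 0 by field_simp; ring,
      show π/3 - 2*π*0/(3*Real.sqrt 3) = π/3 by norm_num]
  have v1 : Real.sin (2*(π/3)) = Real.sqrt 3/2 := by
    rw [show (2:ℝ)*(π/3) = π - π/3 by ring, Real.sin_pi_sub, Real.sin_pi_div_three]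
  have v2 : Real.sin (2*(2*(π/3))) = -(Real.sqrt 3/2) := by
    rw [show (2:ℝ)*(2*(π/3)) = π + π/3 by ring, Real.sin_add, Real.sin_pi, Real.cos_pi,
      Real.sin_pi_div_three]; ring
  have v3 : Real.sin (3*(2*(π/3))) = 0 := by
    rw [show (3:ℝ)*(2*(π/3)) = 2*π by ring, Real.sin_two_pi]
  have v4 : Real.sin (2*(2*(2*(π/3)))) = Real.sqrt 3/2 := by
    rw [show (2:ℝ)*(2*(2*(π/3))) = 2*π + (π - π/3) by ring, Real.sin_add, Real.sin_two_pi,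
      Real.cos_two_pi, Real.sin_pi_sub, Real.sin_pi_div_three]; ring
  have v5 : Real.cos (3*(2*(π/3))) = 1 := by
    rw [show (3:ℝ)*(2*(π/3)) = 2*π by ring, Real.cos_two_pi]
  rw [v1, v2, v3, v4, v5]
  norm_num
  ring

end Aux

/-- Cross-term integrals of the partial derivatives of `u₁` and `u₂` over the
equilateral triangle `E` with vertices `(0,0)`, `(1,0)`, `(1/2,√3/2)`:
`∫_E (∂u₁/∂x)(∂u₂/∂y) = 81√3/32 + π` and `∫_E (∂u₁/∂y)(∂u₂/∂x) = 81√3/32 − π`. -/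
theorem stmt_16 (u₁ u₂ : ℝ → ℝ → ℝ)
    (hu₁ : ∀ x y, u₁ x y =
      2 * (cos (π * (2 * x - 1) / 3) + cos (2 * π * y / sqrt 3)) * sin (π * (2 * x - 1) / 3))
    (hu₂ : ∀ x y, u₂ x y =
      cos (2 * π * (2 * x - 1) / 3) - 2 * cos (π * (2 * x - 1) / 3) * cos (2 * π * y / sqrt 3))
    (E : Set (ℝ × ℝ))
    (hE : E = convexHull ℝ {((0 : ℝ), (0 : ℝ)), (1, 0), (1 / 2, sqrt 3 / 2)}) :
    (∫ p in E, deriv (fun t => u₁ t p.2) p.1 * deriv (fun s => u₂ p.1 s) p.2)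
      = 81 * sqrt 3 / 32 + π ∧
    (∫ p in E, deriv (fun s => u₁ p.1 s) p.2 * deriv (fun t => u₂ t p.2) p.1)
      = 81 * sqrt 3 / 32 - π := by
  have hcomp : IsCompact (convexHull ℝ {((0:ℝ),(0:ℝ)), (1,0), (1/2, Real.sqrt 3/2)}) :=
    (Set.toFinite _).isCompact_convexHull ℝ
  have hrw1 : ∀ p : ℝ × ℝ, deriv (fun t => u₁ t p.2) p.1
      = (4*π/3) * ((Real.cos (π*(2*p.1-1)/3) + Real.cos (2*π*p.2/Real.sqrt 3))
          * Real.cos (π*(2*p.1-1)/3) - Real.sin (π*(2*p.1-1)/3)^2) := by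
    intro p
    have : (fun t => u₁ t p.2) = (fun t => 2*(Real.cos (π*(2*t-1)/3)
        + Real.cos (2*π*p.2/Real.sqrt 3)) * Real.sin (π*(2*t-1)/3)) := by
      funext t; rw [hu₁]
    rw [this]
    exact (d1x' p.2 p.1).deriv
  have hrw2 : ∀ p : ℝ × ℝ, deriv (fun s => u₂ p.1 s) p.2
      = (4*π/Real.sqrt 3) * Real.cos (π*(2*p.1-1)/3) * Real.sin (2*π*p.2/Real.sqrt 3) := by
    intro p
    have : (fun s => u₂ p.1 s) = (fun s => Real.cos (2*π*(2*p.1-1)/3)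
        - 2*Real.cos (π*(2*p.1-1)/3) * Real.cos (2*π*s/Real.sqrt 3)) := by
      funext s; rw [hu₂]
    rw [this]
    exact (d2y' p.1 p.2).deriv
  have hrw3 : ∀ p : ℝ × ℝ, deriv (fun s => u₁ p.1 s) p.2
      = -(4*π/Real.sqrt 3) * Real.sin (π*(2*p.1-1)/3) * Real.sin (2*π*p.2/Real.sqrt 3) := by
    intro p
    have : (fun s => u₁ p.1 s) = (fun s => 2*(Real.cos (π*(2*p.1-1)/3)
        + Real.cos (2*π*s/Real.sqrt 3)) * Real.sin (π*(2*p.1-1)/3)) := by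
      funext s; rw [hu₁]
    rw [this]
    exact (d1y' p.1 p.2).deriv
  have hrw4 : ∀ p : ℝ × ℝ, deriv (fun t => u₂ t p.2) p.1
      = (4*π/3) * (Real.sin (π*(2*p.1-1)/3) * Real.cos (2*π*p.2/Real.sqrt 3)
        - Real.sin (2*π*(2*p.1-1)/3)) := by
    intro p
    have : (fun t => u₂ t p.2) = (fun t => Real.cos (2*π*(2*t-1)/3)
        - 2*Real.cos (π*(2*t-1)/3) * Real.cos (2*π*p.2/Real.sqrt 3)) := by
      funext t; rw [hu₂]
    rw [this]
    exact (d2x' p.2 p.1).deriv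
  constructor
  · simp only [hrw1, hrw2, hE]
    rw [tri_fubini' _ (by fun_prop) _ hull_eq' hcomp]
    rw [MeasureTheory.setIntegral_congr_fun measurableSet_Icc
      (fun y hy => innerA y hy)]
    exact outerA
  · simp only [hrw3, hrw4, hE]
    rw [tri_fubini' _ (by fun_prop) _ hull_eq' hcomp]
    rw [MeasureTheory.setIntegral_congr_fun measurableSet_Icc
      (fun y hy => innerB y hy)]
    exact outerB
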